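/- Fix real parameters 0 < α < 1, η ≥ 0, β > 0, r > 0, K > 0 and δ ∈ ℝ with δ ≥ r + (1−α)·β. Set ρ := (δ−r)/(α−1) (so that ρ + β ≤ 0) and define M(t) := max(η, K^{1/(α−1)}·e^{(ρ+β)t}) for t ≥ 0, extended by M(t) := η for t < 0, with associated Lebesgue–Stieltjes measure μ_M on [0,∞). Then: (a) M(t) = max(η, K^{1/(α−1)}) for every t ≥ 0, so μ_M is the point mass of size max(K^{1/(α−1)} − η, 0) at t = 0, and the level of satisfaction of the tracking plan is Y(t) = e^{−βt}·max(η, K^{1/(α−1)}); (b) the discounted cost equals (1/β)·∫_{[0,∞)} e^{−(r+β)t} dμ_M(t) = (1/β)·max(K^{1/(α−1)} − η, 0); (c) for any initial wealth w > 0, the choice K = (η + βw)^{α−1} makes this cost equal to w, i.e. the agent consumes the whole amount w in a single gulp at time 0. -/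

import Mathlib

open MeasureTheory

/-- Fix real parameters 0 < α < 1, η ≥ 0, β > 0, r > 0, K > 0 and δ ∈ ℝ with
δ ≥ r + (1−α)·β. Set ρ := (δ−r)/(α−1) (so that ρ + β ≤ 0) and define
M(t) := max(η, K^{1/(α−1)}·e^{(ρ+β)t}) for t ≥ 0, extended by M(t) := η for t < 0, with
associated Lebesgue–Stieltjes measure μ_M on [0,∞) (modelled by a Stieltjes function f
agreeing with M). Then:
(a) M(t) = max(η, K^{1/(α−1)}) for every t ≥ 0, so μ_M is the point mass of size
    max(K^{1/(α−1)} − η, 0) at t = 0;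
(b) the discounted cost equals
    (1/β)·∫_{[0,∞)} e^{−(r+β)t} dμ_M(t) = (1/β)·max(K^{1/(α−1)} − η, 0);
(c) for any initial wealth w > 0, the choice K = (η + βw)^{α−1} makes this cost equal
    to w. -/
theorem stmt_14 (α η β r K δ : ℝ) (hα0 : 0 < α) (hα1 : α < 1) (hη : 0 ≤ η)
    (hβ : 0 < β) (hr : 0 < r) (hK : 0 < K)
    (hδ : r + (1 - α) * β ≤ δ)
    (ρ : ℝ) (hρ : ρ = (δ - r) / (α - 1))
    (f : StieltjesFunction ℝ)
    (hf : ∀ t : ℝ, f t = if t < 0 then η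
        else max η (K ^ ((1 : ℝ) / (α - 1)) * Real.exp ((ρ + β) * t))) :
    (∀ t : ℝ, 0 ≤ t → f t = max η (K ^ ((1 : ℝ) / (α - 1)))) ∧
    f.measure = ENNReal.ofReal (max (K ^ ((1 : ℝ) / (α - 1)) - η) 0) •
      MeasureTheory.Measure.dirac (0 : ℝ) ∧
    (1 / β) * ∫ t in Set.Ici (0 : ℝ), Real.exp (-(r + β) * t) ∂f.measure
      = (1 / β) * max (K ^ ((1 : ℝ) / (α - 1)) - η) 0 ∧
    (∀ w : ℝ, 0 < w → K = (η + β * w) ^ (α - 1) →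
      (1 / β) * ∫ t in Set.Ici (0 : ℝ), Real.exp (-(r + β) * t) ∂f.measure = w) := by
  set c : ℝ := K ^ ((1 : ℝ) / (α - 1)) with hc
  have hcpos : 0 < c := Real.rpow_pos_of_pos hK _
  have hα1' : α - 1 < 0 := by linarith
  have hρβ : ρ + β ≤ 0 := by
    have : ρ ≤ -β := by
      rw [hρ, div_le_iff_of_neg hα1']
      nlinarith
    linarith
  -- part (a)
  have hf0 : f 0 = max η c := by
    rw [hf 0]
    simp
  have key : ∀ t : ℝ, 0 ≤ t → f t = max η c := by
    intro t ht
    have hle : f t ≤ max η c := by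
      rw [hf t, if_neg (not_lt.mpr ht)]
      have : Real.exp ((ρ + β) * t) ≤ 1 := by
        rw [Real.exp_le_one_iff]
        exact mul_nonpos_of_nonpos_of_nonneg hρβ ht
      exact max_le_max le_rfl (by nlinarith [Real.exp_pos ((ρ + β) * t)])
    have hge : max η c ≤ f t := hf0 ▸ f.mono ht
    exact le_antisymm hle hge
  have hmax : max η c - η = max (c - η) 0 := by
      rcases le_total η c with h | h
      · rw [max_eq_right h, max_eq_left (by linarith)]
      · rw [max_eq_left h, max_eq_right (by linarith)]; ring
  have hmeas : f.measure = ENNReal.ofReal (max (c - η) 0) •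
      MeasureTheory.Measure.dirac (0 : ℝ) := by
    refine Measure.ext_of_Ioc _ _ (fun a b hab => ?_)
    rw [f.measure_Ioc]
    rcases lt_or_ge a 0 with ha | ha
    · have hfa : f a = η := by rw [hf a, if_pos ha]
      rcases lt_or_ge b 0 with hb | hb
      · have hfb : f b = η := by rw [hf b, if_pos hb]
        have h0 : (0 : ℝ) ∉ Set.Ioc a b := by
          simp [Set.mem_Ioc]; intro; linarith
        rw [hfa, hfb]
        simp [Measure.dirac_apply' _ measurableSet_Ioc, Set.indicator_of_notMem h0]
      · have h0 : (0 : ℝ) ∈ Set.Ioc a b := ⟨ha, hb⟩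
        rw [key b hb, hfa, hmax]
        simp [Measure.dirac_apply' _ measurableSet_Ioc, Set.indicator_of_mem h0]
    · have hb : (0 : ℝ) ≤ b := le_of_lt (lt_of_le_of_lt ha hab)
      have h0 : (0 : ℝ) ∉ Set.Ioc a b := fun h => absurd h.1 (not_lt.mpr ha)
      rw [key b hb, key a ha]
      simp [Measure.dirac_apply' _ measurableSet_Ioc, Set.indicator_of_notMem h0]
  have hint : ∫ t in Set.Ici (0 : ℝ), Real.exp (-(r + β) * t) ∂f.measure
      = max (c - η) 0 := by
    rw [hmeas, Measure.restrict_smul, integral_smul_measure, setIntegral_dirac]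
    simp [ENNReal.toReal_ofReal (le_max_right (c - η) 0), ENNReal.toReal_ofReal']
  refine ⟨key, hmeas, by rw [hint], ?_⟩
  intro w hw hKw
  have hcw : c = η + β * w := by
    rw [hc, hKw, ← Real.rpow_mul (by positivity), mul_one_div_cancel hα1'.ne,
      Real.rpow_one]
  rw [hint, hcw]
  have : max (η + β * w - η) 0 = β * w := by
    rw [max_eq_left (by nlinarith)]; ring
  rw [this]
  field_simp
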